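/- arXiv:1210.7261 — 4 statements merged into one kernel-verified Lean document; each statement's English description precedes it below -/
import Mathlib

section
/- Let f, g : ℝ³ → ℂ be continuously differentiable functions such that f, g and their gradients ∇f, ∇g are square-integrable on ℝ³. Then the convolution N*(f̄ g), i.e. the function x ↦ ∫_{ℝ³} conj(f(y)) g(y)/(4π|x−y|) dy, is well defined and bounded on ℝ³. -/
open MeasureTheory Real

noncomputable section

/-- Partial derivative in the `j`-th coordinate direction on `ℝ³`. -/
def pd {E : Type*} [NormedAddCommGroup E] [NormedSpace ℝ E]
    (j : Fin 3) (f : EuclideanSpace ℝ (Fin 3) → E)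
    (x : EuclideanSpace ℝ (Fin 3)) : E :=
  fderiv ℝ f x (EuclideanSpace.single j 1)

set_option maxHeartbeats 1000000

open Set Filter
open scoped ENNReal NNReal Topology

local notation "E3" => EuclideanSpace ℝ (Fin 3)

namespace NewtonianPotentialAux

lemma kernel_finite :
    ∫⁻ z in Metric.ball (0:E3) 1, ENNReal.ofReal (‖z‖⁻¹) ^ (3/2:ℝ) < ⊤ := by
  set μ₁ : Measure E3 := volume.restrict (Metric.ball (0:E3) 1) with hμ₁
  have hV : volume (Metric.ball (0:E3) 1) < ⊤ := measure_ball_lt_top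
  set V : ℝ≥0∞ := volume (Metric.ball (0:E3) 1) with hVdef
  have hmeas : Measurable fun z : E3 => ‖z‖⁻¹ ^ (3/2:ℝ) := by fun_prop
  have hnn : ∀ z : E3, 0 ≤ ‖z‖⁻¹ ^ (3/2:ℝ) := fun z => rpow_nonneg (by positivity) _
  have heq : ∀ z : E3, ENNReal.ofReal (‖z‖⁻¹) ^ (3/2:ℝ) = ENNReal.ofReal (‖z‖⁻¹ ^ (3/2:ℝ)) :=
    fun z => ENNReal.ofReal_rpow_of_nonneg (by positivity) (by norm_num)
  calc ∫⁻ z in Metric.ball (0:E3) 1, ENNReal.ofReal (‖z‖⁻¹) ^ (3/2:ℝ)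
      = ∫⁻ z, ENNReal.ofReal (‖z‖⁻¹ ^ (3/2:ℝ)) ∂μ₁ := by
        simp_rw [heq]
        rfl
    _ = ∫⁻ t in Ioi (0:ℝ), μ₁ {a | t ≤ ‖a‖⁻¹ ^ (3/2:ℝ)} :=
        lintegral_eq_lintegral_meas_le μ₁ (Filter.Eventually.of_forall hnn) hmeas.aemeasurable
    _ < ⊤ := by
        have hsplit : Ioi (0:ℝ) = Ioc (0:ℝ) 1 ∪ Ioi 1 := (Ioc_union_Ioi_eq_Ioi zero_le_one).symm
        rw [hsplit]
        refine lt_of_le_of_lt (lintegral_union_le _ _ _) (ENNReal.add_lt_top.2 ⟨?_, ?_⟩)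
        · -- small t : bound measure by V
          have : ∀ t ∈ Ioc (0:ℝ) 1, μ₁ {a | t ≤ ‖a‖⁻¹ ^ (3/2:ℝ)} ≤ V := by
            intro t _
            exact le_trans (measure_mono (subset_univ _)) (by
              rw [hμ₁, Measure.restrict_apply_univ])
          calc ∫⁻ t in Ioc (0:ℝ) 1, μ₁ {a | t ≤ ‖a‖⁻¹ ^ (3/2:ℝ)}
              ≤ ∫⁻ _ in Ioc (0:ℝ) 1, V := setLIntegral_mono' measurableSet_Ioc this
            _ = V * volume (Ioc (0:ℝ) 1) := setLIntegral_const _ _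
            _ < ⊤ := by
                rw [Real.volume_Ioc]
                exact ENNReal.mul_lt_top hV (by norm_num)
        · -- large t : measure ≤ ofReal (t ^ (-2)) * V
          have hbound : ∀ t ∈ Ioi (1:ℝ), μ₁ {a | t ≤ ‖a‖⁻¹ ^ (3/2:ℝ)}
              ≤ ENNReal.ofReal (t ^ (-2:ℝ)) * V := by
            intro t ht
            have ht0 : (0:ℝ) < t := lt_trans one_pos ht
            have hsub : {a : E3 | t ≤ ‖a‖⁻¹ ^ (3/2:ℝ)} ⊆
                Metric.closedBall 0 (t ^ (-(2/3):ℝ)) := by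
              intro a ha
              simp only [mem_setOf_eq] at ha
              simp only [Metric.mem_closedBall, dist_zero_right]
              rcases eq_or_ne a 0 with rfl | ha0
              · simp only [norm_zero]
                positivity
              · have hna : (0:ℝ) < ‖a‖ := norm_pos_iff.2 ha0
                have h1 : t ≤ ‖a‖ ^ (-(3/2):ℝ) := by
                  rw [← Real.rpow_neg_one ‖a‖, ← Real.rpow_mul hna.le] at ha
                  norm_num at ha; exact ha
                have h2 : (t:ℝ) ^ (-(2/3):ℝ) ≥ (‖a‖ ^ (-(3/2):ℝ)) ^ (-(2/3):ℝ) := by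
                  apply Real.rpow_le_rpow_of_nonpos ht0 h1 (by norm_num)
                rwa [← Real.rpow_mul hna.le, show (-(3/2:ℝ)) * (-(2/3:ℝ)) = 1 by norm_num,
                  Real.rpow_one] at h2
            calc μ₁ {a : E3 | t ≤ ‖a‖⁻¹ ^ (3/2:ℝ)}
                ≤ volume (Metric.closedBall (0:E3) (t ^ (-(2/3):ℝ))) := by
                  rw [hμ₁]
                  exact le_trans (Measure.restrict_apply_le _ _) (measure_mono hsub)
              _ = ENNReal.ofReal ((t ^ (-(2/3):ℝ)) ^ Module.finrank ℝ E3) *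
                    volume (Metric.ball (0:E3) 1) :=
                  Measure.addHaar_closedBall _ _ (by positivity)
              _ = ENNReal.ofReal (t ^ (-2:ℝ)) * V := by
                  rw [finrank_euclideanSpace_fin, ← Real.rpow_natCast (t ^ (-(2/3):ℝ)) 3,
                    ← Real.rpow_mul ht0.le]
                  rw [hVdef]
                  norm_num
          calc ∫⁻ t in Ioi (1:ℝ), μ₁ {a | t ≤ ‖a‖⁻¹ ^ (3/2:ℝ)}
              ≤ ∫⁻ t in Ioi (1:ℝ), ENNReal.ofReal (t ^ (-2:ℝ)) * V :=
                setLIntegral_mono' measurableSet_Ioi hbound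
            _ = (∫⁻ t in Ioi (1:ℝ), ENNReal.ofReal (t ^ (-2:ℝ))) * V := by
                rw [lintegral_mul_const'' _ (by fun_prop : AEMeasurable (fun t : ℝ => ENNReal.ofReal (t ^ (-2:ℝ))) (volume.restrict (Ioi 1)))]
            _ < ⊤ := by
                refine ENNReal.mul_lt_top ?_ hV
                have hint : IntegrableOn (fun t : ℝ => t ^ (-2:ℝ)) (Ioi 1) volume :=
                  integrableOn_Ioi_rpow_of_lt (by norm_num) one_pos
                have := hint.2
                rw [hasFiniteIntegral_iff_norm] at this
                refine lt_of_le_of_lt (le_of_eq ?_) this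
                refine setLIntegral_congr_fun measurableSet_Ioi
                  (fun t ht => ?_)
                rw [Real.norm_eq_abs, abs_of_nonneg (rpow_nonneg (le_trans zero_le_one (le_of_lt ht)) _)]

lemma norm_clm_le_sum (L : E3 →L[ℝ] ℂ) :
    ‖L‖ ≤ ∑ j : Fin 3, ‖L (EuclideanSpace.single j 1)‖ := by
  refine L.opNorm_le_bound (Finset.sum_nonneg fun j _ => norm_nonneg _) fun v => ?_
  have hv : v = ∑ j : Fin 3, v j • EuclideanSpace.single j (1:ℝ) := by
    ext i
    have h : (∑ x : Fin 3, v x • EuclideanSpace.single x (1:ℝ)) i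
        = ∑ x : Fin 3, (v x • EuclideanSpace.single x (1:ℝ)) i :=
      by rw [WithLp.ofLp_sum]; exact Finset.sum_apply i Finset.univ _
    rw [h]
    simp [EuclideanSpace.single_apply]
  calc ‖L v‖ = ‖∑ j : Fin 3, v j • L (EuclideanSpace.single j 1)‖ := by
        conv_lhs => rw [hv]
        rw [map_sum]
        simp
    _ ≤ ∑ j : Fin 3, ‖v j • L (EuclideanSpace.single j 1)‖ := norm_sum_le _ _
    _ ≤ ∑ j : Fin 3, ‖v‖ * ‖L (EuclideanSpace.single j 1)‖ := by
        refine Finset.sum_le_sum fun j _ => ?_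
        rw [norm_smul]
        have hvj : ‖v j‖ ≤ ‖v‖ := by
          have h2 : |v j| ≤ ‖v‖ := by
            have := EuclideanSpace.norm_eq v
            rw [this]
            simp only [Real.norm_eq_abs, sq_abs]
            have hle : (v j)^2 ≤ ∑ i : Fin 3, (v i)^2 :=
              Finset.single_le_sum (fun i _ => sq_nonneg (v i)) (Finset.mem_univ j)
            calc |v j| = Real.sqrt ((v j)^2) := (Real.sqrt_sq_eq_abs _).symm
              _ ≤ Real.sqrt (∑ i : Fin 3, (v i)^2) := Real.sqrt_le_sqrt hle
          exact h2
        exact mul_le_mul_of_nonneg_right hvj (norm_nonneg _)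
    _ = (∑ j : Fin 3, ‖L (EuclideanSpace.single j 1)‖) * ‖v‖ := by
        rw [Finset.sum_mul]
        exact Finset.sum_congr rfl fun j _ => mul_comm _ _

lemma memLp_fderiv (u : E3 → ℂ) (hu : ContDiff ℝ 1 u)
    (hdu : ∀ j : Fin 3, MemLp (pd j u) 2 volume) :
    MemLp (fderiv ℝ u) 2 volume := by
  have hsum : MemLp (fun x => ∑ j : Fin 3, ‖pd j u x‖) 2 volume :=
    memLp_finset_sum _ (fun j _ => (hdu j).norm)
  refine hsum.of_le ((hu.continuous_fderiv one_ne_zero).aestronglyMeasurable) ?_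
  refine Filter.Eventually.of_forall fun x => ?_
  have h1 : ‖fderiv ℝ u x‖ ≤ ∑ j : Fin 3, ‖pd j u x‖ := norm_clm_le_sum (fderiv ℝ u x)
  refine h1.trans (le_abs_self _)

lemma memLp_six (u : E3 → ℂ) (hu : ContDiff ℝ 1 u) (hu2 : MemLp u 2 volume)
    (hdu : MemLp (fderiv ℝ u) 2 volume) : MemLp u 6 volume := by
  classical
  -- bump function
  set φ : ContDiffBump (0 : E3) := ⟨1, 2, one_pos, one_lt_two⟩ with hφ
  set χ : E3 → ℝ := ⇑φ with hχ
  have hχsm : ContDiff ℝ (⊤:ℕ∞) χ := φ.contDiff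
  have hχd_cont : Continuous (fderiv ℝ χ) := (hχsm.continuous_fderiv (by norm_num))
  obtain ⟨D, hD⟩ := hχd_cont.bounded_above_of_compact_support
    ((φ.hasCompactSupport).fderiv ℝ)
  have hD0 : 0 ≤ D := le_trans (norm_nonneg _) (hD 0)
  -- the cutoff functions
  set L : ℕ → (E3 →L[ℝ] E3) := fun n => ((n+1:ℝ))⁻¹ • ContinuousLinearMap.id ℝ E3 with hL
  have hc : ∀ n : ℕ, (0:ℝ) < n + 1 := fun n => by positivity
  have hc1 : ∀ n : ℕ, (1:ℝ) ≤ n + 1 := fun n => by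
    have := Nat.cast_nonneg (α := ℝ) n; linarith
  have hLnorm : ∀ n, ‖L n‖ ≤ 1 := by
    intro n
    refine ContinuousLinearMap.opNorm_le_bound _ zero_le_one fun v => ?_
    simp only [hL, ContinuousLinearMap.smul_apply, ContinuousLinearMap.id_apply, norm_smul,
      norm_inv, Real.norm_eq_abs, abs_of_pos (hc n), one_mul]
    have h1 : ((n:ℝ)+1)⁻¹ ≤ 1 := by
      rw [inv_le_one_iff₀]; right; exact hc1 n
    exact mul_le_of_le_one_left (norm_nonneg v) h1
  set un : ℕ → E3 → ℂ := fun n x => χ (L n x) • u x with hun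
  have hχn : ∀ n, ContDiff ℝ 1 (fun x => χ (L n x)) := fun n =>
    (hχsm.of_le (by norm_num)).comp (L n).contDiff
  have hunC : ∀ n, ContDiff ℝ 1 (un n) := fun n => (hχn n).smul hu
  have hsupp : ∀ n, HasCompactSupport (un n) := by
    intro n
    refine HasCompactSupport.intro (isCompact_closedBall (0:E3) (2*(n+1))) fun x hx => ?_
    have hxn : 2*((n:ℝ)+1) < ‖x‖ := by
      simpa [Metric.mem_closedBall, dist_zero_right, not_le] using hx
    have : χ (L n x) = 0 := by
      have hmem : L n x ∉ Function.support χ := by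
        rw [hχ, φ.support_eq]
        simp only [Metric.mem_ball, dist_zero_right, not_lt, hL,
          ContinuousLinearMap.smul_apply, ContinuousLinearMap.id_apply, norm_smul, norm_inv,
          Real.norm_eq_abs, abs_of_pos (hc n)]
        rw [le_inv_mul_iff₀ (hc n)]
        linarith
      exact Function.notMem_support.mp hmem
    simp [hun, this]
  -- derivative bound
  have hderiv_bound : ∀ n x, ‖fderiv ℝ (un n) x‖ ≤ ‖fderiv ℝ u x‖ + D * ‖u x‖ := by
    intro n x
    have hχdiff : DifferentiableAt ℝ (fun x => χ (L n x)) x :=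
      ((hχn n).differentiable one_ne_zero) x
    have hudiff : DifferentiableAt ℝ u x := (hu.differentiable one_ne_zero) x
    have heq : fderiv ℝ (un n) x
        = χ (L n x) • fderiv ℝ u x + (fderiv ℝ (fun x => χ (L n x)) x).smulRight (u x) :=
      fderiv_smul hχdiff hudiff
    have hχnd : ‖fderiv ℝ (fun x => χ (L n x)) x‖ ≤ D := by
      have hcomp : fderiv ℝ (fun x => χ (L n x)) x = (fderiv ℝ χ (L n x)).comp (L n) := by
        have := fderiv_comp (𝕜 := ℝ) x ((hχsm.differentiable (by norm_num)) (L n x))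
          ((L n).differentiableAt)
        rw [Function.comp_def] at this
        rw [this, (L n).fderiv]
      rw [hcomp]
      calc ‖(fderiv ℝ χ (L n x)).comp (L n)‖ ≤ ‖fderiv ℝ χ (L n x)‖ * ‖L n‖ :=
            ContinuousLinearMap.opNorm_comp_le _ _
        _ ≤ D * 1 := mul_le_mul (hD _) (hLnorm n) (norm_nonneg _) hD0
        _ = D := mul_one D
    rw [heq]
    calc ‖χ (L n x) • fderiv ℝ u x + (fderiv ℝ (fun x => χ (L n x)) x).smulRight (u x)‖
        ≤ ‖χ (L n x) • fderiv ℝ u x‖ + ‖(fderiv ℝ (fun x => χ (L n x)) x).smulRight (u x)‖ :=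
          norm_add_le _ _
      _ ≤ ‖fderiv ℝ u x‖ + D * ‖u x‖ := by
          have hA : ‖χ (L n x) • fderiv ℝ u x‖ ≤ ‖fderiv ℝ u x‖ := by
            refine le_trans (norm_smul_le (χ (L n x)) (fderiv ℝ u x)) ?_
            rw [Real.norm_eq_abs, abs_of_nonneg φ.nonneg]
            exact mul_le_of_le_one_left (norm_nonneg _) φ.le_one
          have hB : ‖(fderiv ℝ (fun x => χ (L n x)) x).smulRight (u x)‖ ≤ D * ‖u x‖ := by
            rw [ContinuousLinearMap.norm_smulRight_apply]
            exact mul_le_mul_of_nonneg_right hχnd (norm_nonneg _)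
          exact add_le_add hA hB
  -- L² bound on the derivative
  set B2 : ℝ≥0∞ := eLpNorm (fderiv ℝ u) 2 volume + (‖D‖₊ : ℝ≥0∞) * eLpNorm u 2 volume with hB2
  have hB2fin : B2 < ⊤ :=
    ENNReal.add_lt_top.2 ⟨hdu.eLpNorm_lt_top,
      ENNReal.mul_lt_top ENNReal.coe_lt_top hu2.eLpNorm_lt_top⟩
  have hd2 : ∀ n, eLpNorm (fderiv ℝ (un n)) 2 volume ≤ B2 := by
    intro n
    have hmaj : eLpNorm (fderiv ℝ (un n)) 2 volume
        ≤ eLpNorm ((fun x => ‖fderiv ℝ u x‖) + (fun x => D * ‖u x‖)) 2 volume :=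
      eLpNorm_mono_real fun x => hderiv_bound n x
    refine hmaj.trans ?_
    have h1 : AEStronglyMeasurable (fun x => ‖fderiv ℝ u x‖) volume :=
      ((hu.continuous_fderiv one_ne_zero).norm).aestronglyMeasurable
    have h2 : AEStronglyMeasurable (fun x => D * ‖u x‖) volume :=
      (continuous_const.mul hu.continuous.norm).aestronglyMeasurable
    refine (eLpNorm_add_le h1 h2 (by norm_num)).trans ?_
    rw [hB2]
    gcongr
    · rw [eLpNorm_norm]
    · have : (fun x => D * ‖u x‖) = D • (fun x => ‖u x‖) := by
        funext x; simp [smul_eq_mul]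
      rw [this, eLpNorm_const_smul, eLpNorm_norm, enorm_eq_nnnorm]
  -- Sobolev inequality for each n
  set CS : ℝ≥0 := SNormLESNormFDerivOfEqConst ℂ (volume : Measure E3) 2 with hCS
  have hsob : ∀ n, eLpNorm (un n) 6 volume ≤ (CS : ℝ≥0∞) * B2 := by
    intro n
    have key := eLpNorm_le_eLpNorm_fderiv_of_eq (volume : Measure E3) (hunC n) (hsupp n)
      (p := 2) (p' := 6) (by norm_num) (by rw [finrank_euclideanSpace_fin]; norm_num) ?hpq
    case hpq => rw [finrank_euclideanSpace_fin]; push_cast; norm_num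
    have h6 : ((6:ℝ≥0) : ℝ≥0∞) = (6 : ℝ≥0∞) := by norm_cast
    have h2 : ((2:ℝ≥0) : ℝ≥0∞) = (2 : ℝ≥0∞) := by norm_cast
    rw [h6, h2] at key
    exact key.trans (mul_le_mul_right (hd2 n) _)
  -- Fatou
  set B6 : ℝ≥0∞ := ((CS : ℝ≥0∞) * B2) ^ (6:ℝ) with hB6def
  have hB6fin : B6 < ⊤ := by
    rw [hB6def]
    exact ENNReal.rpow_lt_top_of_nonneg (by norm_num)
      (ENNReal.mul_lt_top ENNReal.coe_lt_top hB2fin).ne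
  have hlin : ∀ n, ∫⁻ x, (‖un n x‖₊ : ℝ≥0∞) ^ (6:ℝ) ≤ B6 := by
    intro n
    have h := hsob n
    rw [eLpNorm_eq_lintegral_rpow_enorm_toReal (by norm_num) (by norm_num)] at h
    have h6 : ((6:ℝ≥0∞)).toReal = (6:ℝ) := by norm_num
    rw [h6] at h
    have := ENNReal.rpow_le_rpow h (by norm_num : (0:ℝ) ≤ 6)
    rwa [← ENNReal.rpow_mul, one_div, inv_mul_cancel₀ (by norm_num : (6:ℝ) ≠ 0),
      ENNReal.rpow_one] at this
  have hptwise : ∀ x : E3, Filter.liminf (fun n => (‖un n x‖₊ : ℝ≥0∞) ^ (6:ℝ)) atTop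
      = (‖u x‖₊ : ℝ≥0∞) ^ (6:ℝ) := by
    intro x
    have hev : ∀ᶠ n in atTop, (‖un n x‖₊ : ℝ≥0∞) ^ (6:ℝ) = (‖u x‖₊ : ℝ≥0∞) ^ (6:ℝ) := by
      filter_upwards [Filter.eventually_ge_atTop (Nat.ceil ‖x‖)] with n hn
      have hxle : ‖x‖ ≤ (n:ℝ) + 1 := by
        calc ‖x‖ ≤ (Nat.ceil ‖x‖ : ℝ) := Nat.le_ceil _
          _ ≤ (n:ℝ) := by exact_mod_cast hn
          _ ≤ (n:ℝ) + 1 := by linarith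
      have hmem : L n x ∈ Metric.closedBall (0:E3) φ.rIn := by
        simp only [hL, Metric.mem_closedBall, dist_zero_right,
          ContinuousLinearMap.smul_apply, ContinuousLinearMap.id_apply, norm_smul, norm_inv,
          Real.norm_eq_abs, abs_of_pos (hc n)]
        show ((n:ℝ)+1)⁻¹ * ‖x‖ ≤ (1:ℝ)
        rw [inv_mul_le_iff₀ (hc n), mul_one]
        exact hxle
      have : χ (L n x) = 1 := φ.one_of_mem_closedBall hmem
      simp [hun, this]
    rw [Filter.liminf_congr hev, Filter.liminf_const]
  have hmeasn : ∀ n, Measurable fun x => (‖un n x‖₊ : ℝ≥0∞) ^ (6:ℝ) := by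
    intro n
    exact ((hunC n).continuous.measurable.nnnorm.coe_nnreal_ennreal).pow_const (6:ℝ) |>.mono le_rfl le_rfl
  have hkey : ∫⁻ x, (‖u x‖₊ : ℝ≥0∞) ^ (6:ℝ) ≤ B6 := by
    calc ∫⁻ x, (‖u x‖₊ : ℝ≥0∞) ^ (6:ℝ)
        = ∫⁻ x, Filter.liminf (fun n => (‖un n x‖₊ : ℝ≥0∞) ^ (6:ℝ)) atTop := by
          refine lintegral_congr fun x => (hptwise x).symm
      _ ≤ Filter.liminf (fun n => ∫⁻ x, (‖un n x‖₊ : ℝ≥0∞) ^ (6:ℝ)) atTop :=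
          lintegral_liminf_le hmeasn
      _ ≤ B6 := by
          have h2 := Filter.liminf_le_liminf (Filter.Eventually.of_forall hlin)
            (f := atTop) (u := fun n => ∫⁻ x, (‖un n x‖₊ : ℝ≥0∞) ^ (6:ℝ)) (v := fun _ => B6)
          rwa [Filter.liminf_const] at h2
  refine ⟨hu.continuous.aestronglyMeasurable, ?_⟩
  rw [eLpNorm_eq_lintegral_rpow_enorm_toReal (by norm_num) (by norm_num)]
  have h6 : ((6:ℝ≥0∞)).toReal = (6:ℝ) := by norm_num
  rw [h6]
  exact ENNReal.rpow_lt_top_of_nonneg (by norm_num) (lt_of_le_of_lt hkey hB6fin).ne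

lemma lint_pow_lt_top {u : E3 → ℂ} {p : ℝ≥0∞} {pr : ℝ} (hp0 : p ≠ 0) (hpt : p ≠ ⊤)
    (hpr : p.toReal = pr) (hu : MemLp u p volume) :
    ∫⁻ x, (‖u x‖₊ : ℝ≥0∞) ^ pr < ⊤ := by
  subst hpr
  have h := hu.eLpNorm_lt_top
  rw [eLpNorm_eq_lintegral_rpow_enorm_toReal hp0 hpt] at h
  have ht : 0 < p.toReal := ENNReal.toReal_pos hp0 hpt
  have h2 := ENNReal.rpow_lt_top_of_nonneg ht.le h.ne
  rwa [← ENNReal.rpow_mul, one_div, inv_mul_cancel₀ ht.ne', ENNReal.rpow_one] at h2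

lemma conj2 : Real.HolderConjugate 2 2 := by constructor <;> norm_num
lemma conj32 : Real.HolderConjugate 3 (3/2) := by constructor <;> norm_num

-- main uniform bound on the lintegral
lemma main_bound (f g : E3 → ℂ) (hf : Continuous f) (hg : Continuous g)
    (hf2 : MemLp f 2 volume) (hg2 : MemLp g 2 volume)
    (hf6 : MemLp f 6 volume) (hg6 : MemLp g 6 volume) :
    ∃ C : ℝ≥0∞, C ≠ ⊤ ∧ ∀ x : E3,
      ∫⁻ y, ((‖f y‖₊ : ℝ≥0∞) * (‖g y‖₊ : ℝ≥0∞)) * ENNReal.ofReal ((4*π*‖x-y‖)⁻¹) ≤ C := by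
  have hπ : (1:ℝ) ≤ 4*π := by nlinarith [pi_gt_three]
  set Φf : E3 → ℝ≥0∞ := fun y => (‖f y‖₊ : ℝ≥0∞) with hΦf
  set Φg : E3 → ℝ≥0∞ := fun y => (‖g y‖₊ : ℝ≥0∞) with hΦg
  have hΦfm : Measurable Φf := hf.measurable.nnnorm.coe_nnreal_ennreal
  have hΦgm : Measurable Φg := hg.measurable.nnnorm.coe_nnreal_ennreal
  -- the L^p masses
  set If2 : ℝ≥0∞ := ∫⁻ y, Φf y ^ (2:ℝ) with hIf2
  set Ig2 : ℝ≥0∞ := ∫⁻ y, Φg y ^ (2:ℝ) with hIg2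
  set If6 : ℝ≥0∞ := ∫⁻ y, Φf y ^ (6:ℝ) with hIf6
  set Ig6 : ℝ≥0∞ := ∫⁻ y, Φg y ^ (6:ℝ) with hIg6
  have hIf2fin : If2 < ⊤ :=
    lint_pow_lt_top (u := f) (p := 2) (by norm_num) (by norm_num) (by norm_num) hf2
  have hIg2fin : Ig2 < ⊤ :=
    lint_pow_lt_top (u := g) (p := 2) (by norm_num) (by norm_num) (by norm_num) hg2
  have hIf6fin : If6 < ⊤ :=
    lint_pow_lt_top (u := f) (p := 6) (by norm_num) (by norm_num) (by norm_num) hf6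
  have hIg6fin : Ig6 < ⊤ :=
    lint_pow_lt_top (u := g) (p := 6) (by norm_num) (by norm_num) (by norm_num) hg6
  -- the kernel constant
  set c₁ : ℝ≥0∞ := ∫⁻ z in Metric.ball (0:E3) 1, ENNReal.ofReal (‖z‖⁻¹) ^ (3/2:ℝ) with hc₁
  have hc₁fin : c₁ < ⊤ := kernel_finite
  -- the constant
  set C : ℝ≥0∞ := (If6 ^ (1/2:ℝ) * Ig6 ^ (1/2:ℝ)) ^ (1/3:ℝ) * c₁ ^ (1/(3/2:ℝ))
      + ENNReal.ofReal ((4*π)⁻¹) * (If2 ^ (1/2:ℝ) * Ig2 ^ (1/2:ℝ)) with hC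
  refine ⟨C, ?_, ?_⟩
  · rw [hC]
    refine ENNReal.add_ne_top.2 ⟨?_, ?_⟩
    · refine (ENNReal.mul_lt_top ?_ ?_).ne
      · refine ENNReal.rpow_lt_top_of_nonneg (by norm_num) ?_
        exact (ENNReal.mul_lt_top
          (ENNReal.rpow_lt_top_of_nonneg (by norm_num) hIf6fin.ne)
          (ENNReal.rpow_lt_top_of_nonneg (by norm_num) hIg6fin.ne)).ne
      · exact ENNReal.rpow_lt_top_of_nonneg (by norm_num) hc₁fin.ne
    · refine (ENNReal.mul_lt_top ENNReal.ofReal_lt_top ?_).ne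
      exact ENNReal.mul_lt_top
        (ENNReal.rpow_lt_top_of_nonneg (by norm_num) hIf2fin.ne)
        (ENNReal.rpow_lt_top_of_nonneg (by norm_num) hIg2fin.ne)
  intro x
  set K : E3 → ℝ≥0∞ := fun y => ENNReal.ofReal ((4*π*‖x-y‖)⁻¹) with hK
  have hKm : Measurable K := by
    apply Measurable.ennreal_ofReal
    exact ((continuous_const.mul ((continuous_const.sub continuous_id).norm)).measurable).inv
  set Kb : E3 → ℝ≥0∞ := (Metric.ball x 1).indicator K with hKb
  have hKbm : Measurable Kb := hKm.indicator Metric.isOpen_ball.measurableSet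
  have hsplit : ∀ y, K y ≤ Kb y + ENNReal.ofReal ((4*π)⁻¹) := by
    intro y
    by_cases hy : y ∈ Metric.ball x 1
    · rw [hKb, Set.indicator_of_mem hy]
      exact le_self_add
    · rw [hKb, Set.indicator_of_notMem hy, zero_add]
      have h1 : (1:ℝ) ≤ ‖x - y‖ := by
        have := hy
        simp only [Metric.mem_ball, not_lt] at this
        rwa [dist_eq_norm, norm_sub_rev] at this
      refine ENNReal.ofReal_le_ofReal ?_
      have h4 : (0:ℝ) < 4*π := by linarith
      refine inv_anti₀ h4 ?_
      nlinarith
  -- split the integral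
  have hstep : ∫⁻ y, (Φf y * Φg y) * K y
      ≤ (∫⁻ y, (Φf y * Φg y) * Kb y) + ∫⁻ y, (Φf y * Φg y) * ENNReal.ofReal ((4*π)⁻¹) := by
    calc ∫⁻ y, (Φf y * Φg y) * K y
        ≤ ∫⁻ y, ((Φf y * Φg y) * Kb y + (Φf y * Φg y) * ENNReal.ofReal ((4*π)⁻¹)) := by
          refine lintegral_mono fun y => ?_
          rw [← mul_add]
          exact mul_le_mul_right (hsplit y) _
      _ = _ := lintegral_add_left (((hΦfm.mul hΦgm).mul hKbm)) _
  -- far part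
  have hfar : ∫⁻ y, (Φf y * Φg y) * ENNReal.ofReal ((4*π)⁻¹)
      ≤ ENNReal.ofReal ((4*π)⁻¹) * (If2 ^ (1/2:ℝ) * Ig2 ^ (1/2:ℝ)) := by
    have h1 : ∫⁻ y, (Φf y * Φg y) * ENNReal.ofReal ((4*π)⁻¹)
        = ENNReal.ofReal ((4*π)⁻¹) * ∫⁻ y, Φf y * Φg y := by
      rw [← lintegral_const_mul _ (f := fun y => Φf y * Φg y) (hΦfm.mul hΦgm)]
      congr 1; funext y; ring
    rw [h1]
    refine mul_le_mul_right ?_ _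
    exact ENNReal.lintegral_mul_le_Lp_mul_Lq volume conj2
      hΦfm.aemeasurable hΦgm.aemeasurable
  -- near part
  have hnear : ∫⁻ y, (Φf y * Φg y) * Kb y
      ≤ (If6 ^ (1/2:ℝ) * Ig6 ^ (1/2:ℝ)) ^ (1/3:ℝ) * c₁ ^ (1/(3/2:ℝ)) := by
    have hH := ENNReal.lintegral_mul_le_Lp_mul_Lq volume conj32
      (hΦfm.mul hΦgm).aemeasurable hKbm.aemeasurable
    refine le_trans hH ?_
    refine mul_le_mul ?_ ?_ zero_le zero_le
    · -- product factor
      have h3 : ∫⁻ y, (Φf y * Φg y) ^ (3:ℝ) = ∫⁻ y, Φf y ^ (3:ℝ) * Φg y ^ (3:ℝ) := by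
        congr 1; funext y
        rw [ENNReal.mul_rpow_of_nonneg _ _ (by norm_num : (0:ℝ) ≤ 3)]
      have hH2 : ∫⁻ y, Φf y ^ (3:ℝ) * Φg y ^ (3:ℝ)
          ≤ (∫⁻ y, (Φf y ^ (3:ℝ)) ^ (2:ℝ)) ^ (1/2:ℝ)
            * (∫⁻ y, (Φg y ^ (3:ℝ)) ^ (2:ℝ)) ^ (1/2:ℝ) :=
        ENNReal.lintegral_mul_le_Lp_mul_Lq volume conj2
          ((hΦfm.pow_const _).aemeasurable (f := fun y => Φf y ^ (3:ℝ)))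
          ((hΦgm.pow_const _).aemeasurable (f := fun y => Φg y ^ (3:ℝ)))
      have h66 : ∀ (Φ : E3 → ℝ≥0∞), (fun y => (Φ y ^ (3:ℝ)) ^ (2:ℝ)) = fun y => Φ y ^ (6:ℝ) := by
        intro Φ; funext y
        rw [← ENNReal.rpow_mul]; norm_num
      refine ENNReal.rpow_le_rpow ?_ (by norm_num : (0:ℝ) ≤ 1/3)
      rw [show (∫⁻ a, (Φf * Φg) a ^ (3:ℝ)) = ∫⁻ y, (Φf y * Φg y) ^ (3:ℝ) from rfl, h3]
      refine hH2.trans (le_of_eq ?_)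
      rw [hIf6, hIg6]
      congr 2
      · rw [h66 Φf]
      · rw [h66 Φg]
    · -- kernel factor
      refine ENNReal.rpow_le_rpow ?_ (by norm_num : (0:ℝ) ≤ 1/(3/2))
      set H : E3 → ℝ≥0∞ :=
        (Metric.ball (0:E3) 1).indicator (fun z => ENNReal.ofReal (‖z‖⁻¹) ^ (3/2:ℝ)) with hH0
      have hHm : Measurable H := by
        refine Measurable.indicator ?_ Metric.isOpen_ball.measurableSet
        exact (measurable_norm.inv.ennreal_ofReal).pow_const _
      have hpt : ∀ y, Kb y ^ (3/2:ℝ) ≤ H (x - y) := by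
        intro y
        by_cases hy : y ∈ Metric.ball x 1
        · have hy' : x - y ∈ Metric.ball (0:E3) 1 := by
            simpa [Metric.mem_ball, dist_eq_norm, dist_comm x y, norm_sub_rev] using hy
          rw [hKb, Set.indicator_of_mem hy, hH0, Set.indicator_of_mem hy']
          refine ENNReal.rpow_le_rpow ?_ (by norm_num)
          rw [hK]
          refine ENNReal.ofReal_le_ofReal ?_
          rcases eq_or_lt_of_le (norm_nonneg (x - y)) with h0 | h0
          · rw [← h0]; simp
          · refine inv_anti₀ h0 ?_
            nlinarith
        · have hy' : x - y ∉ Metric.ball (0:E3) 1 := by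
            simpa [Metric.mem_ball, dist_eq_norm, dist_comm x y, norm_sub_rev] using hy
          rw [hKb, Set.indicator_of_notMem hy, hH0, Set.indicator_of_notMem hy',
            ENNReal.zero_rpow_of_pos (by norm_num)]
      calc ∫⁻ y, Kb y ^ (3/2:ℝ) ≤ ∫⁻ y, H (x - y) := lintegral_mono hpt
        _ = ∫⁻ z, H z := (Measure.measurePreserving_sub_left volume x).lintegral_comp hHm
        _ = c₁ := by rw [hH0, lintegral_indicator Metric.isOpen_ball.measurableSet, hc₁]
  calc ∫⁻ y, (Φf y * Φg y) * K y
      ≤ _ := hstep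
    _ ≤ C := by rw [hC]; exact add_le_add hnear hfar

end NewtonianPotentialAux

open NewtonianPotentialAux

/-- if `f, g : ℝ³ → ℂ` are `C¹` with `f, g, ∇f, ∇g ∈ L²`, then
the convolution `N*(f̄ g)`, `x ↦ ∫ conj(f(y)) g(y)/(4π|x−y|) dy`, is well
defined (the integrand is integrable for each `x`) and bounded on `ℝ³`. -/
theorem newtonian_potential_of_H1_product_bounded
    (f g : EuclideanSpace ℝ (Fin 3) → ℂ)
    (hf : ContDiff ℝ 1 f) (hg : ContDiff ℝ 1 g)
    (hf2 : MemLp f 2 volume) (hg2 : MemLp g 2 volume)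
    (hdf : ∀ j : Fin 3, MemLp (pd j f) 2 volume)
    (hdg : ∀ j : Fin 3, MemLp (pd j g) 2 volume) :
    (∀ x : EuclideanSpace ℝ (Fin 3),
      Integrable (fun y => (starRingEnd ℂ) (f y) * g y / ((4 * π * ‖x - y‖ : ℝ) : ℂ))) ∧
    (∃ C : ℝ, ∀ x : EuclideanSpace ℝ (Fin 3),
      ‖∫ y, (starRingEnd ℂ) (f y) * g y / ((4 * π * ‖x - y‖ : ℝ) : ℂ)‖ ≤ C) := by
  have hf6 : MemLp f 6 volume := memLp_six f hf hf2 (memLp_fderiv f hf hdf)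
  have hg6 : MemLp g 6 volume := memLp_six g hg hg2 (memLp_fderiv g hg hdg)
  obtain ⟨C, hCne, hCb⟩ :=
    main_bound f g hf.continuous hg.continuous hf2 hg2 hf6 hg6
  have hnorm : ∀ x y : E3,
      ENNReal.ofReal ‖(starRingEnd ℂ) (f y) * g y / ((4 * π * ‖x - y‖ : ℝ) : ℂ)‖
      = ((‖f y‖₊ : ℝ≥0∞) * (‖g y‖₊ : ℝ≥0∞)) * ENNReal.ofReal ((4*π*‖x-y‖)⁻¹) := by
    intro x y
    have h1 : ‖(starRingEnd ℂ) (f y) * g y / ((4 * π * ‖x - y‖ : ℝ) : ℂ)‖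
        = ‖f y‖ * ‖g y‖ * (4*π*‖x-y‖)⁻¹ := by
      rw [norm_div, norm_mul, RCLike.norm_conj, Complex.norm_real, Real.norm_eq_abs,
        abs_of_nonneg (by positivity), div_eq_mul_inv]
    rw [h1, ENNReal.ofReal_mul (by positivity), ENNReal.ofReal_mul (norm_nonneg _),
      ofReal_norm, ofReal_norm, enorm_eq_nnnorm, enorm_eq_nnnorm]
  have hmeas : ∀ x : E3, AEStronglyMeasurable
      (fun y => (starRingEnd ℂ) (f y) * g y / ((4 * π * ‖x - y‖ : ℝ) : ℂ)) volume := by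
    intro x
    have hrw : (fun y : E3 => (starRingEnd ℂ) (f y) * g y / ((4 * π * ‖x - y‖ : ℝ) : ℂ))
        = fun y : E3 => (starRingEnd ℂ) (f y) * g y * ((((4*π*‖x-y‖)⁻¹ : ℝ) : ℂ)) := by
      funext y
      rw [div_eq_mul_inv, ← Complex.ofReal_inv]
    rw [hrw]
    refine Measurable.aestronglyMeasurable ?_
    have hc1 : Continuous fun y : E3 => (starRingEnd ℂ) (f y) * g y :=
      (continuous_star.comp hf.continuous).mul hg.continuous
    have hm2 : Measurable fun y : E3 => (((4*π*‖x-y‖)⁻¹ : ℝ) : ℂ) :=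
      Complex.measurable_ofReal.comp
        (((continuous_const.mul ((continuous_const.sub continuous_id).norm)).measurable).inv)
    exact hc1.measurable.mul hm2
  have hlint : ∀ x : E3,
      ∫⁻ y, (‖(starRingEnd ℂ) (f y) * g y / ((4 * π * ‖x - y‖ : ℝ) : ℂ)‖₊ : ℝ≥0∞) ≤ C := by
    intro x
    have heq : ∫⁻ y, (‖(starRingEnd ℂ) (f y) * g y / ((4 * π * ‖x - y‖ : ℝ) : ℂ)‖₊ : ℝ≥0∞)
        = ∫⁻ y, ((‖f y‖₊ : ℝ≥0∞) * (‖g y‖₊ : ℝ≥0∞)) * ENNReal.ofReal ((4*π*‖x-y‖)⁻¹) := by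
      refine lintegral_congr fun y => ?_
      exact (ofReal_norm _).symm.trans (hnorm x y)
    rw [heq]
    exact hCb x
  constructor
  · intro x
    refine ⟨hmeas x, ?_⟩
    exact lt_of_le_of_lt (hlint x) hCne.lt_top
  · refine ⟨C.toReal, fun x => ?_⟩
    refine le_trans (norm_integral_le_lintegral_norm _) ?_
    refine ENNReal.toReal_mono hCne ?_
    refine le_trans (le_of_eq (lintegral_congr fun y => ?_)) (hlint x)
    exact ofReal_norm _
end
end

section
/- Let H be a complex inner product space (inner product conjugate-linear in the first argument), let D ⊆ H be a subspace, and let L₀, L₁ : D → H be linear maps that are symmetric on D (⟨u, Lᵢv⟩ = ⟨Lᵢu, v⟩ for all u, v ∈ D). Suppose R, S ∈ D and λ ∈ ℂ satisfy λR = L₀S and λS = −L₁R, and suppose ⟨S, R⟩ ≠ 0, ⟨S, L₀S⟩ ≥ 0, and ⟨R, L₁R⟩ ≥ 0. Then λ² is real and λ² ≤ 0; i.e. λ is purely imaginary. (This is the key step showing that the point spectrum of the linearization of the Choquard equation at the ground state lies on the imaginary axis, so the ground state solitary wave is linearly stable.) -/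
open scoped ComplexOrder ComplexInnerProductSpace

/-- If `L₀, L₁` are symmetric linear maps on a subspace `D` of a
complex inner product space, `λR = L₀S`, `λS = −L₁R`, `⟨S,R⟩ ≠ 0`,
`⟨S, L₀S⟩ ≥ 0` and `⟨R, L₁R⟩ ≥ 0`, then `λ²` is real with `λ² ≤ 0`, i.e. `λ`
is purely imaginary.  (Key step in the linear stability of the Choquard
ground state solitary wave.) -/
theorem eigenvalue_purely_imaginary
    {H : Type*} [NormedAddCommGroup H] [InnerProductSpace ℂ H]
    (D : Submodule ℂ H) (L₀ L₁ : D →ₗ[ℂ] H)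
    (hL₀sym : ∀ u v : D, ⟪(u : H), L₀ v⟫ = ⟪L₀ u, (v : H)⟫)
    (hL₁sym : ∀ u v : D, ⟪(u : H), L₁ v⟫ = ⟪L₁ u, (v : H)⟫)
    (R S : D) (lam : ℂ)
    (h₁ : lam • (R : H) = L₀ S) (h₂ : lam • (S : H) = -(L₁ R))
    (hSR : ⟪(S : H), (R : H)⟫ ≠ 0)
    (hS : 0 ≤ ⟪(S : H), L₀ S⟫) (hR : 0 ≤ ⟪(R : H), L₁ R⟫) :
    lam ^ 2 ≤ 0 ∧ lam.re = 0 := by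
  set c : ℂ := ⟪(S : H), (R : H)⟫ with hc
  have ha : ⟪(S : H), L₀ S⟫ = lam * c := by
    rw [← h₁, inner_smul_right]
  have hb : ⟪(R : H), L₁ R⟫ = -(lam * (starRingEnd ℂ) c) := by
    have : (L₁ R : H) = -(lam • (S : H)) := by rw [h₂, neg_neg]
    rw [this, inner_neg_right, inner_smul_right, ← inner_conj_symm, hc]
  rw [ha] at hS
  rw [hb] at hR
  -- product ab = -λ² |c|²
  have hprod : (lam * c) * (-(lam * (starRingEnd ℂ) c)) =
      -(lam ^ 2 * (Complex.normSq c : ℂ)) := by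
    rw [← Complex.mul_conj]
    ring
  have hab : 0 ≤ (lam * c) * (-(lam * (starRingEnd ℂ) c)) := mul_nonneg hS hR
  rw [hprod] at hab
  have hns : (0 : ℝ) < Complex.normSq c := by
    have := Complex.normSq_pos.mpr hSR
    simpa using this
  have hsq : lam ^ 2 ≤ 0 := by
    have h0 : lam ^ 2 * (Complex.normSq c : ℂ) ≤ 0 := by
      rw [← neg_nonneg]; exact hab
    have hinv : (0 : ℂ) ≤ ((Complex.normSq c)⁻¹ : ℝ) := by
      rw [Complex.zero_le_real]
      positivity
    have key : lam ^ 2 = (lam ^ 2 * (Complex.normSq c : ℂ)) * ((Complex.normSq c)⁻¹ : ℝ) := by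
      push_cast
      field_simp
    rw [key, ← neg_nonneg, ← neg_mul]
    exact mul_nonneg (by rwa [neg_nonneg] at hab ⊢) hinv
  refine ⟨hsq, ?_⟩
  have him : (lam ^ 2).im = 0 := by
    have := hsq
    rw [Complex.le_def] at this
    exact this.2
  have hre : (lam ^ 2).re ≤ 0 := by
    rw [Complex.le_def] at hsq
    simpa using hsq.1
  simp [pow_two, Complex.mul_im] at him
  simp [pow_two, Complex.mul_re] at hre
  have him' : lam.re * lam.im = 0 := by linarith
  rcases mul_eq_zero.mp him' with h | h
  · exact h
  · have h2 : lam.re * lam.re ≤ 0 := by nlinarith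
    exact mul_self_eq_zero.mp (le_antisymm h2 (mul_self_nonneg _))
end

section
/- Fix m > 0 and e ≠ 0, let φ₀ be a Choquard ground state, and let e₁ = (1,0) ∈ ℂ². Define Φ̂₂(y) = φ₀(y) e₁, Φ̂₁(y) = (i/(2m)) σ·∇Φ̂₂(y), and Â⁰ = e² N*φ₀². Then the pair (Φ̂₁, Φ̂₂) together with Â⁰ satisfies the nonrelativistic limit system: 2mΦ̂₁ + P̸Φ̂₂ = 0 and P̸Φ̂₁ − (1/(2m))Φ̂₂ + Â⁰Φ̂₂ = 0 pointwise on ℝ³, where P̸ = −iσ·∇. -/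
open MeasureTheory Real

noncomputable section

/-- Laplacian on `ℝ³`, `Δf = Σⱼ ∂ⱼ∂ⱼ f`. -/
def lap {E : Type*} [NormedAddCommGroup E] [NormedSpace ℝ E]
    (f : EuclideanSpace ℝ (Fin 3) → E) (x : EuclideanSpace ℝ (Fin 3)) : E :=
  ∑ j : Fin 3, pd j (pd j f) x

/-- Convolution with the Newtonian potential `N(x) = 1/(4π|x|)` on `ℝ³`,
for real-valued functions. -/
def Nconv (h : EuclideanSpace ℝ (Fin 3) → ℝ) (x : EuclideanSpace ℝ (Fin 3)) : ℝ :=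
  ∫ y, h y / (4 * π * ‖x - y‖)

/-- A Choquard ground state: a strictly positive, spherically symmetric,
Schwartz-class function `φ₀ : ℝ³ → ℝ` with
`(1/(2m))φ₀ − (1/(2m))Δφ₀ − e²(N*φ₀²)φ₀ = 0`. -/
def IsChoquardGroundState (m e : ℝ) (φ₀ : EuclideanSpace ℝ (Fin 3) → ℝ) : Prop :=
  (∀ x, 0 < φ₀ x) ∧
  (∀ x y : EuclideanSpace ℝ (Fin 3), ‖x‖ = ‖y‖ → φ₀ x = φ₀ y) ∧
  (∃ Φ : SchwartzMap (EuclideanSpace ℝ (Fin 3)) ℝ, ∀ x, Φ x = φ₀ x) ∧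
  (∀ x, (1 / (2 * m)) * φ₀ x - (1 / (2 * m)) * lap φ₀ x
      - e ^ 2 * Nconv (fun y => (φ₀ y) ^ 2) x * φ₀ x = 0)

/-- The linearized operator `L₀v = −(1/(2m))Δv + (1/(2m))v − e²(N*φ₀²)v`. -/
def L0 (m e : ℝ) (φ₀ v : EuclideanSpace ℝ (Fin 3) → ℝ)
    (x : EuclideanSpace ℝ (Fin 3)) : ℝ :=
  -(1 / (2 * m)) * lap v x + (1 / (2 * m)) * v x
    - e ^ 2 * Nconv (fun y => (φ₀ y) ^ 2) x * v x

/-- The linearized operator `L₁v = L₀v − 2e²(N*(φ₀v))φ₀`. -/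
def L1 (m e : ℝ) (φ₀ v : EuclideanSpace ℝ (Fin 3) → ℝ)
    (x : EuclideanSpace ℝ (Fin 3)) : ℝ :=
  L0 m e φ₀ v x - 2 * e ^ 2 * Nconv (fun y => φ₀ y * v y) x * φ₀ x

/-- The Pauli matrices `σ₁, σ₂, σ₃`. -/
def pauli : Fin 3 → Matrix (Fin 2) (Fin 2) ℂ :=
  ![!![0, 1; 1, 0], !![0, -Complex.I; Complex.I, 0], !![1, 0; 0, -1]]

/-- `σ·∇ = σ₁∂₁ + σ₂∂₂ + σ₃∂₃` acting on `f : ℝ³ → ℂ²`. -/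
def sigmaDeriv (f : EuclideanSpace ℝ (Fin 3) → Fin 2 → ℂ)
    (x : EuclideanSpace ℝ (Fin 3)) : Fin 2 → ℂ :=
  ∑ j : Fin 3, (pauli j).mulVec (pd j f x)

/-- `P̸ = −i σ·∇`. -/
def Pslash (f : EuclideanSpace ℝ (Fin 3) → Fin 2 → ℂ)
    (x : EuclideanSpace ℝ (Fin 3)) : Fin 2 → ℂ :=
  (-Complex.I) • sigmaDeriv f x

lemma pd_comp_clm {F G : Type*} [NormedAddCommGroup F] [NormedSpace ℝ F]
    [NormedAddCommGroup G] [NormedSpace ℝ G] (L : F →L[ℝ] G)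
    {f : EuclideanSpace ℝ (Fin 3) → F} {x : EuclideanSpace ℝ (Fin 3)}
    (hf : DifferentiableAt ℝ f x) (j : Fin 3) :
    pd j (fun y => L (f y)) x = L (pd j f x) := by
  unfold pd
  rw [show (fun y => L (f y)) = (⇑L ∘ f) from rfl,
    (L.hasFDerivAt.comp x hf.hasFDerivAt).fderiv]
  rfl

lemma pd_const_smul {E : Type*} [NormedAddCommGroup E] [NormedSpace ℝ E]
    [Module ℂ E] [SMulCommClass ℝ ℂ E] [ContinuousConstSMul ℂ E]
    (c : ℂ) {f : EuclideanSpace ℝ (Fin 3) → E} {x} (hf : DifferentiableAt ℝ f x) (j : Fin 3) :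
    pd j (fun y => c • f y) x = c • pd j f x := by
  unfold pd
  rw [fderiv_fun_const_smul hf]
  rfl

lemma pd_add {f g : EuclideanSpace ℝ (Fin 3) → ℂ} {x} (hf : DifferentiableAt ℝ f x)
    (hg : DifferentiableAt ℝ g x) (j : Fin 3) :
    pd j (fun y => f y + g y) x = pd j f x + pd j g x := by
  unfold pd
  rw [fderiv_fun_add hf hg]; rfl

lemma pd_ofReal {g : EuclideanSpace ℝ (Fin 3) → ℝ} {x} (hg : DifferentiableAt ℝ g x) (j : Fin 3) :
    pd j (fun y => (g y : ℂ)) x = Complex.ofReal (pd j g x) := by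
  simpa using pd_comp_clm Complex.ofRealCLM hg j

lemma pd_mulI {g : EuclideanSpace ℝ (Fin 3) → ℂ} {x} (hg : DifferentiableAt ℝ g x) (j : Fin 3) :
    pd j (fun y => g y * Complex.I) x = pd j g x * Complex.I := by
  have h : (fun y => g y * Complex.I) = fun y => Complex.I • g y := by
    funext y; simp [smul_eq_mul, mul_comm]
  rw [h, pd_const_smul _ hg, smul_eq_mul, mul_comm]

lemma pd_pd_symm {φ : EuclideanSpace ℝ (Fin 3) → ℝ} (hφ : ContDiff ℝ ((⊤:ℕ∞)) φ)
    (j k : Fin 3) (x : EuclideanSpace ℝ (Fin 3)) :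
    pd j (pd k φ) x = pd k (pd j φ) x := by
  have hd : Differentiable ℝ φ := hφ.differentiable (by simp)
  have hd' : Differentiable ℝ (fderiv ℝ φ) :=
    (hφ.fderiv_right (m := (⊤:ℕ∞)) (by exact_mod_cast le_top)).differentiable (by simp)
  have key : ∀ a b : Fin 3, pd a (pd b φ) x
      = fderiv ℝ (fderiv ℝ φ) x (EuclideanSpace.single a 1) (EuclideanSpace.single b 1) := by
    intro a b
    unfold pd
    rw [fderiv_clm_apply (hd' x) (differentiableAt_const _)]
    simp
  rw [key, key]
  exact second_derivative_symmetric (fun y => (hd y).hasFDerivAt) (hd' x).hasFDerivAt _ _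

lemma pd_contDiff {φ : EuclideanSpace ℝ (Fin 3) → ℝ} (hφ : ContDiff ℝ ((⊤:ℕ∞)) φ) (k : Fin 3) :
    ContDiff ℝ ((⊤:ℕ∞)) (pd k φ) :=
  (hφ.fderiv_right (m := (⊤:ℕ∞)) (by exact_mod_cast le_top)).clm_apply contDiff_const

/-- with `Φ̂₂ = φ₀ e₁`, `Φ̂₁ = (i/(2m)) σ·∇Φ̂₂` and
`Â⁰ = e² N*φ₀²` built from a Choquard ground state `φ₀`, the
nonrelativistic limit system `2mΦ̂₁ + P̸Φ̂₂ = 0` and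
`P̸Φ̂₁ − (1/(2m))Φ̂₂ + Â⁰Φ̂₂ = 0` holds pointwise on `ℝ³`. -/
theorem nonrelativistic_limit_system_holds
    (m e : ℝ) (hm : 0 < m) (he : e ≠ 0)
    (φ₀ : EuclideanSpace ℝ (Fin 3) → ℝ)
    (hφ₀ : IsChoquardGroundState m e φ₀)
    (Φ₂ Φ₁ : EuclideanSpace ℝ (Fin 3) → Fin 2 → ℂ)
    (hΦ₂ : ∀ y, Φ₂ y = ((φ₀ y : ℂ)) • (![1, 0] : Fin 2 → ℂ))
    (hΦ₁ : ∀ y, Φ₁ y = (Complex.I / (2 * m)) • sigmaDeriv Φ₂ y)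
    (A0 : EuclideanSpace ℝ (Fin 3) → ℝ)
    (hA0 : ∀ y, A0 y = e ^ 2 * Nconv (fun z => (φ₀ z) ^ 2) y) :
    (∀ x, ((2 * m : ℝ) : ℂ) • Φ₁ x + Pslash Φ₂ x = 0) ∧
    (∀ x, Pslash Φ₁ x - ((1 / (2 * m) : ℝ) : ℂ) • Φ₂ x
        + ((A0 x : ℝ) : ℂ) • Φ₂ x = 0) := by
  obtain ⟨hpos, hsymR, ⟨Φ, hΦeq⟩, hChoq⟩ := hφ₀
  have hsmooth : ContDiff ℝ ((⊤:ℕ∞)) φ₀ := by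
    have hh : φ₀ = fun x => Φ x := funext fun x => (hΦeq x).symm
    rw [hh]; exact Φ.smooth ⊤
  have hφdiff : Differentiable ℝ φ₀ := hsmooth.differentiable (by simp)
  have hDdiff : ∀ k : Fin 3, Differentiable ℝ (pd k φ₀) :=
    fun k => (pd_contDiff hsmooth k).differentiable (by simp)
  have hm' : (m : ℂ) ≠ 0 := by exact_mod_cast hm.ne'
  set e1 : Fin 2 → ℂ := ![1, 0] with he1
  have hΦ₂fun : Φ₂ = fun y => ((ContinuousLinearMap.id ℝ ℝ).smulRight e1) (φ₀ y) := by
    funext y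
    rw [hΦ₂]
    funext i
    simp [Complex.real_smul]
  have hpdΦ₂ : ∀ (j : Fin 3) x, pd j Φ₂ x = pd j φ₀ x • e1 := by
    intro j x
    rw [hΦ₂fun, pd_comp_clm _ (hφdiff x) j]
    simp
  set S : EuclideanSpace ℝ (Fin 3) → Fin 2 → ℂ :=
    fun x => ![Complex.ofReal (pd 2 φ₀ x),
      Complex.ofReal (pd 0 φ₀ x) + Complex.ofReal (pd 1 φ₀ x) * Complex.I] with hSdef
  have hS : ∀ x, sigmaDeriv Φ₂ x = S x := by
    intro x
    unfold sigmaDeriv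
    funext i
    simp only [hpdΦ₂, Finset.sum_apply, Fin.sum_univ_three]
    fin_cases i <;>
      simp [pauli, Matrix.mulVec, dotProduct, Fin.sum_univ_two,
        Complex.real_smul, hSdef, he1] <;> ring
  set c : ℂ := Complex.I / (2 * m) with hc
  have hΦ₁fun : Φ₁ = fun y => c • S y := by
    funext y; rw [hΦ₁ y, hS y]
  have hS0diff : Differentiable ℝ (fun x => Complex.ofReal (pd 2 φ₀ x)) :=
    Complex.ofRealCLM.differentiable.comp (hDdiff 2)
  have hS1diff : Differentiable ℝ (fun x => Complex.ofReal (pd 0 φ₀ x)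
      + Complex.ofReal (pd 1 φ₀ x) * Complex.I) :=
    ((Complex.ofRealCLM.differentiable.comp (hDdiff 0)).add
      ((Complex.ofRealCLM.differentiable.comp (hDdiff 1)).mul_const _))
  have hSdiff : Differentiable ℝ S := by
    rw [hSdef]
    apply differentiable_pi.mpr
    intro i
    fin_cases i
    · simpa using hS0diff
    · simpa using hS1diff
  have hcomp : ∀ (j : Fin 3) x (i : Fin 2), pd j S x i = pd j (fun y => S y i) x := by
    intro j x i
    unfold pd
    rw [fderiv_pi (fun i => differentiableAt_pi.mp (hSdiff x) i)]
    rfl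
  have hpdS : ∀ (j : Fin 3) x, pd j S x =
      ![Complex.ofReal (pd j (pd 2 φ₀) x),
        Complex.ofReal (pd j (pd 0 φ₀) x) + Complex.ofReal (pd j (pd 1 φ₀) x) * Complex.I] := by
    intro j x
    funext i
    rw [hcomp j x i]
    fin_cases i
    · simp only [hSdef, Fin.mk_zero, Matrix.cons_val_zero]
      exact pd_ofReal (hDdiff 2 x) j
    · simp only [hSdef, Fin.mk_one, Matrix.cons_val_one, Matrix.head_cons, Matrix.cons_val_zero]
      have d0 : DifferentiableAt ℝ (fun y => Complex.ofReal (pd 0 φ₀ y)) x :=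
        Complex.ofRealCLM.differentiable.comp (hDdiff 0) x
      have d1 : DifferentiableAt ℝ (fun y => Complex.ofReal (pd 1 φ₀ y)) x :=
        Complex.ofRealCLM.differentiable.comp (hDdiff 1) x
      have d1' : DifferentiableAt ℝ (fun y => Complex.ofReal (pd 1 φ₀ y) * Complex.I) x :=
        d1.mul_const _
      rw [pd_add d0 d1', pd_ofReal (hDdiff 0 x), pd_mulI d1, pd_ofReal (hDdiff 1 x)]
  have hlapC : ∀ x, sigmaDeriv S x = ![Complex.ofReal (lap φ₀ x), 0] := by
    intro x
    unfold sigmaDeriv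
    funext i
    have h01 : Complex.ofReal (pd 0 (pd 1 φ₀) x) = Complex.ofReal (pd 1 (pd 0 φ₀) x) := by
      rw [pd_pd_symm hsmooth]
    have h02 : Complex.ofReal (pd 0 (pd 2 φ₀) x) = Complex.ofReal (pd 2 (pd 0 φ₀) x) := by
      rw [pd_pd_symm hsmooth]
    have h12 : Complex.ofReal (pd 1 (pd 2 φ₀) x) = Complex.ofReal (pd 2 (pd 1 φ₀) x) := by
      rw [pd_pd_symm hsmooth]
    simp only [hpdS, Finset.sum_apply, Fin.sum_univ_three]
    fin_cases i
    · simp [pauli, Matrix.mulVec, dotProduct, Fin.sum_univ_two, lap,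
        Fin.sum_univ_three]
      linear_combination h01 * Complex.I
        - Complex.ofReal (pd 1 (pd 1 φ₀) x) * Complex.I_sq
    · simp [pauli, Matrix.mulVec, dotProduct, Fin.sum_univ_two, lap,
        Fin.sum_univ_three]
      linear_combination h02 + h12 * Complex.I
  have hsigΦ₁ : ∀ x, sigmaDeriv Φ₁ x = c • ![Complex.ofReal (lap φ₀ x), 0] := by
    intro x
    rw [← hlapC x]
    unfold sigmaDeriv
    rw [Finset.smul_sum]
    apply Finset.sum_congr rfl
    intro j _
    rw [hΦ₁fun, pd_const_smul c (hSdiff x) j, Matrix.mulVec_smul]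
  constructor
  · intro x
    rw [hΦ₁ x]
    show ((2 * m : ℝ) : ℂ) • (Complex.I / (2 * m)) • sigmaDeriv Φ₂ x
      + (-Complex.I) • sigmaDeriv Φ₂ x = 0
    rw [smul_smul, ← add_smul]
    have hz : ((2 * m : ℝ) : ℂ) * (Complex.I / (2 * (m:ℂ))) + (-Complex.I) = 0 := by
      push_cast
      field_simp
      ring
    rw [show ((2:ℂ) * (m:ℂ)) = ((2 * m : ℝ) : ℂ) by push_cast; ring] at hz ⊢
    rw [hz, zero_smul]
  · intro x
    have hP : Pslash Φ₁ x = (-Complex.I) • sigmaDeriv Φ₁ x := rfl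
    rw [hP, hsigΦ₁ x, hΦ₂ x, smul_smul]
    have hreal : (1 / (2 * m)) * lap φ₀ x - (1 / (2 * m)) * φ₀ x + A0 x * φ₀ x = 0 := by
      rw [hA0]; have := hChoq x; linarith
    have hC : (((1 / (2 * m)) * lap φ₀ x - (1 / (2 * m)) * φ₀ x + A0 x * φ₀ x : ℝ) : ℂ) = 0 := by
      rw [hreal]; simp
    push_cast at hC
    funext i
    fin_cases i
    · simp [hc, he1, Complex.real_smul, Pi.smul_apply, smul_eq_mul]
      push_cast
      linear_combination hC - (Complex.ofReal (lap φ₀ x) / (2 * (m:ℂ))) * Complex.I_sq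
    · simp [hc, he1, Complex.real_smul, Pi.smul_apply, smul_eq_mul]
end
end

section
/- Fix m > 0 and e ≠ 0 and let φ₀ be a Choquard ground state. Assume in addition that among Schwartz-class real-valued functions the kernel of L₀ is spanned by φ₀ and the kernel of L₁ is spanned by ∂₁φ₀, ∂₂φ₀, ∂₃φ₀. Then the Schwartz-class solutions (U, V) of 𝔐(U, V) = 0 (where 𝔐(U, V) = (2mU + P̸V, P̸U − (1/(2m))V + Â⁰V + 2e²φ₀ N*(φ₀ Re V₁) e₁)) are exactly the pairs with U = −(1/(2m))P̸V and V = (a·∇φ₀) e₁ + i b φ₀ e₁ + c φ₀ e₂, where a ∈ ℝ³, b ∈ ℝ, and c ∈ ℂ. In particular this kernel is a real vector space of dimension 6. -/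
open MeasureTheory Real

noncomputable section

/-- The operator `𝔐` (derivative of the rescaled Dirac–Maxwell map at the
nonrelativistic limit point):
`𝔐(U,V) = (2mU + P̸V, P̸U − (1/(2m))V + Â⁰V + 2e² φ₀ N*(φ₀ Re V₁) e₁)`,
where `Â⁰ = e²N*φ₀²`, `V₁` is the first component of `V`, `e₁ = (1,0)`. -/
def Mop (m e : ℝ) (φ₀ : EuclideanSpace ℝ (Fin 3) → ℝ)
    (U V : EuclideanSpace ℝ (Fin 3) → Fin 2 → ℂ) :
    (EuclideanSpace ℝ (Fin 3) → Fin 2 → ℂ) ×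
      (EuclideanSpace ℝ (Fin 3) → Fin 2 → ℂ) :=
  (fun x => ((2 * m : ℝ) : ℂ) • U x + Pslash V x,
   fun x => Pslash U x - ((1 / (2 * m) : ℝ) : ℂ) • V x
     + ((e ^ 2 * Nconv (fun y => (φ₀ y) ^ 2) x : ℝ) : ℂ) • V x
     + ((2 * e ^ 2 * Nconv (fun y => φ₀ y * (V y 0).re) x * φ₀ x : ℝ) : ℂ) •
         (![1, 0] : Fin 2 → ℂ))


namespace MopAux

local notation "E3" => EuclideanSpace ℝ (Fin 3)
local notation "𝕚" => Complex.I

lemma top_add_one : ((⊤:ℕ∞):WithTop ℕ∞) + 1 ≤ ((⊤:ℕ∞):WithTop ℕ∞) := by norm_cast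

lemma two_le_top : (2 : WithTop ℕ∞) ≤ ((⊤:ℕ∞):WithTop ℕ∞) := by
  rw [← WithTop.coe_ofNat]
  exact WithTop.coe_le_coe.2 le_top

variable {F G : Type*} [NormedAddCommGroup F] [NormedSpace ℝ F]
  [NormedAddCommGroup G] [NormedSpace ℝ G]

lemma pd_clm (L : F →L[ℝ] G) {f : E3 → F} {x : E3} (hf : DifferentiableAt ℝ f x) (j : Fin 3) :
    pd j (fun y => L (f y)) x = L (pd j f x) := by
  have h := (L.hasFDerivAt.comp x hf.hasFDerivAt).fderiv
  simp only [pd]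
  rw [show (fun y => L (f y)) = (⇑L ∘ f) from rfl, h]
  rfl

lemma contDiff_pd {f : E3 → F} (hf : ContDiff ℝ ((⊤:ℕ∞):WithTop ℕ∞) f) (j : Fin 3) :
    ContDiff ℝ ((⊤:ℕ∞):WithTop ℕ∞) (pd j f) := by
  have h1 : ContDiff ℝ ((⊤:ℕ∞):WithTop ℕ∞) (fderiv ℝ f) :=
    hf.fderiv_right top_add_one
  exact (ContinuousLinearMap.apply ℝ F (EuclideanSpace.single j 1)).contDiff.comp h1

lemma diff_of_contDiff {f : E3 → F} (hf : ContDiff ℝ ((⊤:ℕ∞):WithTop ℕ∞) f) {x : E3} :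
    DifferentiableAt ℝ f x :=
  (hf.differentiable (by norm_cast)).differentiableAt

lemma diff_pd {f : E3 → F} (hf : ContDiff ℝ ((⊤:ℕ∞):WithTop ℕ∞) f) (j : Fin 3) {x : E3} :
    DifferentiableAt ℝ (pd j f) x :=
  diff_of_contDiff (contDiff_pd hf j)

lemma pd_comm {f : E3 → F} (hf : ContDiff ℝ ((⊤:ℕ∞):WithTop ℕ∞) f) (j k : Fin 3) (x : E3) :
    pd j (pd k f) x = pd k (pd j f) x := by
  have hd : DifferentiableAt ℝ (fderiv ℝ f) x :=
    diff_of_contDiff (hf.fderiv_right top_add_one)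
  have h1 : ∀ a b : Fin 3, pd a (pd b f) x =
      fderiv ℝ (fderiv ℝ f) x (EuclideanSpace.single a 1) (EuclideanSpace.single b 1) := by
    intro a b
    have h := pd_clm (ContinuousLinearMap.apply ℝ F (EuclideanSpace.single b 1)) hd a
    exact (by simpa [pd] using h : fderiv ℝ (fun y => fderiv ℝ f y (EuclideanSpace.single b 1)) x (EuclideanSpace.single a 1) = _)
  rw [h1, h1]
  exact (hf.contDiffAt.isSymmSndFDerivAt (by rw [minSmoothness_of_isRCLikeNormedField]; exact two_le_top)).eq _ _

lemma pd_add {f g : E3 → F} {x : E3} (hf : DifferentiableAt ℝ f x)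
    (hg : DifferentiableAt ℝ g x) (j : Fin 3) :
    pd j (fun y => f y + g y) x = pd j f x + pd j g x := by
  simp only [pd, fderiv_fun_add hf hg]; rfl

lemma pd_smul {R : Type*} [Semiring R] [Module R F] [SMulCommClass ℝ R F]
    [ContinuousConstSMul R F] {f : E3 → F} {x : E3} (hf : DifferentiableAt ℝ f x)
    (c : R) (j : Fin 3) :
    pd j (fun y => c • f y) x = c • pd j f x := by
  simp only [pd, fderiv_fun_const_smul hf c]; rfl

lemma pd_const_mul {f : E3 → ℂ} {x : E3} (hf : DifferentiableAt ℝ f x) (c : ℂ) (j : Fin 3) :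
    pd j (fun y => c * f y) x = c * pd j f x := pd_smul hf c j

lemma lap_clm (L : F →L[ℝ] G) {f : E3 → F} (hf : ContDiff ℝ ((⊤:ℕ∞):WithTop ℕ∞) f) (x : E3) :
    lap (fun y => L (f y)) x = L (lap f x) := by
  simp only [lap, map_sum]
  refine Finset.sum_congr rfl fun j _ => ?_
  have h1 : (pd j fun y => L (f y)) = fun y => L (pd j f y) := by
    funext y
    exact pd_clm L (diff_of_contDiff hf) j
  rw [h1, pd_clm L (diff_pd hf j) j]

lemma Pslash_apply0 (f : E3 → Fin 2 → ℂ) (x : E3) :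
    Pslash f x 0 = -𝕚 * pd 0 f x 1 - pd 1 f x 1 - 𝕚 * pd 2 f x 0 := by
  simp [Pslash, sigmaDeriv, pauli, Fin.sum_univ_three, Matrix.mulVec, dotProduct,
    Fin.sum_univ_two]
  ring_nf
  simp only [Complex.I_sq]
  ring

lemma Pslash_apply1 (f : E3 → Fin 2 → ℂ) (x : E3) :
    Pslash f x 1 = -𝕚 * pd 0 f x 0 + pd 1 f x 0 + 𝕚 * pd 2 f x 1 := by
  simp [Pslash, sigmaDeriv, pauli, Fin.sum_univ_three, Matrix.mulVec, dotProduct,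
    Fin.sum_univ_two]
  ring_nf
  simp only [Complex.I_sq]
  ring

lemma pd_pi {f : E3 → Fin 2 → ℂ} {x : E3} (hf : DifferentiableAt ℝ f x) (j : Fin 3) (i : Fin 2) :
    pd j f x i = pd j (fun y => f y i) x := by
  have h := pd_clm (ContinuousLinearMap.proj (R := ℝ) (φ := fun _ : Fin 2 => ℂ) i) hf j
  simpa using h.symm

lemma contDiff_comp_pi {f : E3 → Fin 2 → ℂ} (hf : ContDiff ℝ ((⊤:ℕ∞):WithTop ℕ∞) f) (i : Fin 2) :
    ContDiff ℝ ((⊤:ℕ∞):WithTop ℕ∞) (fun y => f y i) :=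
  (ContinuousLinearMap.proj (R := ℝ) (φ := fun _ : Fin 2 => ℂ) i).contDiff.comp hf

lemma contDiff_pslash {f : E3 → Fin 2 → ℂ} (hf : ContDiff ℝ ((⊤:ℕ∞):WithTop ℕ∞) f) :
    ContDiff ℝ ((⊤:ℕ∞):WithTop ℕ∞) (Pslash f) := by
  have h : ∀ j : Fin 3, ContDiff ℝ ((⊤:ℕ∞):WithTop ℕ∞)
      (fun x => (pauli j).mulVec (pd j f x)) := by
    intro j
    rw [contDiff_pi]
    intro i
    have : (fun x => (pauli j).mulVec (pd j f x) i)
        = fun x => ∑ k : Fin 2, pauli j i k * pd j f x k := by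
      funext x; simp [Matrix.mulVec, dotProduct]
    rw [this]
    apply ContDiff.sum
    intro k _
    exact contDiff_const.mul
      ((ContinuousLinearMap.proj (R := ℝ) (φ := fun _ : Fin 2 => ℂ) k).contDiff.comp
        (contDiff_pd hf j))
  have h2 : ContDiff ℝ ((⊤:ℕ∞):WithTop ℕ∞) (sigmaDeriv f) := by
    have : sigmaDeriv f = fun x => ∑ j : Fin 3, (pauli j).mulVec (pd j f x) := rfl
    rw [this]
    exact ContDiff.sum fun j _ => h j
  exact h2.const_smul _

lemma Pslash_smul (c : ℂ) {f : E3 → Fin 2 → ℂ} (hf : Differentiable ℝ f) (x : E3) :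
    Pslash (fun y => c • f y) x = c • Pslash f x := by
  simp only [Pslash, sigmaDeriv]
  have : ∀ j : Fin 3, pd j (fun y => c • f y) x = c • pd j f x :=
    fun j => pd_smul (hf x) c j
  simp only [this, Matrix.mulVec_smul, ← Finset.smul_sum]
  rw [smul_comm]

lemma pd_comb3 (c1 c2 c3 : ℂ) {u v w : E3 → ℂ} {x : E3} (hu : DifferentiableAt ℝ u x)
    (hv : DifferentiableAt ℝ v x) (hw : DifferentiableAt ℝ w x) (j : Fin 3) :
    pd j (fun y => c1 * u y + c2 * v y + c3 * w y) x
      = c1 * pd j u x + c2 * pd j v x + c3 * pd j w x := by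
  rw [pd_add (f := fun y => c1 * u y + c2 * v y) ((hu.const_mul c1).add (hv.const_mul c2)) (hw.const_mul c3) j,
    pd_add (hu.const_mul c1) (hv.const_mul c2) j,
    pd_const_mul hu c1 j, pd_const_mul hv c2 j, pd_const_mul hw c3 j]

lemma pslash_comp0 {f : E3 → Fin 2 → ℂ} (hf : ContDiff ℝ ((⊤:ℕ∞):WithTop ℕ∞) f) :
    (fun y => Pslash f y 0) = fun y =>
      (-𝕚) * pd 0 (fun z => f z 1) y + (-1 : ℂ) * pd 1 (fun z => f z 1) y
        + (-𝕚) * pd 2 (fun z => f z 0) y := by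
  funext y
  rw [Pslash_apply0, pd_pi (diff_of_contDiff hf) 0 1, pd_pi (diff_of_contDiff hf) 1 1,
    pd_pi (diff_of_contDiff hf) 2 0]
  ring

lemma pslash_comp1 {f : E3 → Fin 2 → ℂ} (hf : ContDiff ℝ ((⊤:ℕ∞):WithTop ℕ∞) f) :
    (fun y => Pslash f y 1) = fun y =>
      (-𝕚) * pd 0 (fun z => f z 0) y + (1 : ℂ) * pd 1 (fun z => f z 0) y
        + 𝕚 * pd 2 (fun z => f z 1) y := by
  funext y
  rw [Pslash_apply1, pd_pi (diff_of_contDiff hf) 0 0, pd_pi (diff_of_contDiff hf) 1 0,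
    pd_pi (diff_of_contDiff hf) 2 1]
  ring

lemma pslash_sq0 {f : E3 → Fin 2 → ℂ} (hf : ContDiff ℝ ((⊤:ℕ∞):WithTop ℕ∞) f) (x : E3) :
    Pslash (Pslash f) x 0 = -(lap (fun y => f y 0) x) := by
  have hf0 := contDiff_comp_pi hf 0
  have hf1 := contDiff_comp_pi hf 1
  have hP := contDiff_pslash hf
  rw [Pslash_apply0, pd_pi (diff_of_contDiff hP) 0 1, pd_pi (diff_of_contDiff hP) 1 1,
    pd_pi (diff_of_contDiff hP) 2 0, pslash_comp0 hf, pslash_comp1 hf,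
    pd_comb3 _ _ _ (diff_pd hf0 0) (diff_pd hf0 1) (diff_pd hf1 2) 0,
    pd_comb3 _ _ _ (diff_pd hf0 0) (diff_pd hf0 1) (diff_pd hf1 2) 1,
    pd_comb3 _ _ _ (diff_pd hf1 0) (diff_pd hf1 1) (diff_pd hf0 2) 2]
  rw [pd_comm hf0 1 0 x, pd_comm hf1 2 0 x, pd_comm hf1 2 1 x]
  simp only [lap, Fin.sum_univ_three]
  ring_nf
  simp only [Complex.I_sq]
  ring

lemma pslash_sq1 {f : E3 → Fin 2 → ℂ} (hf : ContDiff ℝ ((⊤:ℕ∞):WithTop ℕ∞) f) (x : E3) :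
    Pslash (Pslash f) x 1 = -(lap (fun y => f y 1) x) := by
  have hf0 := contDiff_comp_pi hf 0
  have hf1 := contDiff_comp_pi hf 1
  have hP := contDiff_pslash hf
  rw [Pslash_apply1, pd_pi (diff_of_contDiff hP) 0 0, pd_pi (diff_of_contDiff hP) 1 0,
    pd_pi (diff_of_contDiff hP) 2 1, pslash_comp0 hf, pslash_comp1 hf,
    pd_comb3 _ _ _ (diff_pd hf1 0) (diff_pd hf1 1) (diff_pd hf0 2) 0,
    pd_comb3 _ _ _ (diff_pd hf1 0) (diff_pd hf1 1) (diff_pd hf0 2) 1,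
    pd_comb3 _ _ _ (diff_pd hf0 0) (diff_pd hf0 1) (diff_pd hf1 2) 2]
  rw [pd_comm hf1 1 0 x, pd_comm hf0 2 0 x, pd_comm hf0 2 1 x]
  simp only [lap, Fin.sum_univ_three]
  ring_nf
  simp only [Complex.I_sq]
  ring

lemma lap_split {g : E3 → ℂ} (hg : ContDiff ℝ ((⊤:ℕ∞):WithTop ℕ∞) g) (x : E3) :
    lap g x = ((lap (fun y => (g y).re) x : ℝ) : ℂ)
      + ((lap (fun y => (g y).im) x : ℝ) : ℂ) * 𝕚 := by
  have hre : lap (fun y => (g y).re) x = (lap g x).re := by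
    have h := lap_clm Complex.reCLM hg x
    simpa using h
  have him : lap (fun y => (g y).im) x = (lap g x).im := by
    have h := lap_clm Complex.imCLM hg x
    simpa using h
  rw [hre, him, Complex.re_add_im]

lemma key0 (m e : ℝ) (φ₀ : E3 → ℝ) {V : E3 → Fin 2 → ℂ}
    (hV : ContDiff ℝ ((⊤:ℕ∞):WithTop ℕ∞) V) (x : E3) :
    (Mop m e φ₀ (fun y => -(((1 / (2 * m) : ℝ)) : ℂ) • Pslash V y) V).2 x 0
      = -((L1 m e φ₀ (fun y => (V y 0).re) x : ℝ) : ℂ)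
        - 𝕚 * ((L0 m e φ₀ (fun y => (V y 0).im) x : ℝ) : ℂ) := by
  have hPs : Pslash (fun y => -(((1 / (2 * m) : ℝ)) : ℂ) • Pslash V y) x
      = -(((1 / (2 * m) : ℝ)) : ℂ) • Pslash (Pslash V) x :=
    Pslash_smul _ (fun _ => diff_of_contDiff (contDiff_pslash hV)) x
  have hsplit : lap (fun y => V y 0) x
      = ((lap (fun y => (V y 0).re) x : ℝ) : ℂ)
        + ((lap (fun y => (V y 0).im) x : ℝ) : ℂ) * 𝕚 :=
    lap_split (contDiff_comp_pi hV 0) x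
  have hVx : V x 0 = (((V x 0).re : ℝ) : ℂ) + (((V x 0).im : ℝ) : ℂ) * 𝕚 :=
    (Complex.re_add_im _).symm
  simp only [Mop, Pi.add_apply, Pi.sub_apply, Pi.smul_apply, smul_eq_mul, hPs,
    Matrix.cons_val_zero, mul_one]
  rw [pslash_sq0 hV x, hsplit, hVx]
  simp only [L1, L0]
  push_cast
  ring

lemma key1 (m e : ℝ) (φ₀ : E3 → ℝ) {V : E3 → Fin 2 → ℂ}
    (hV : ContDiff ℝ ((⊤:ℕ∞):WithTop ℕ∞) V) (x : E3) :
    (Mop m e φ₀ (fun y => -(((1 / (2 * m) : ℝ)) : ℂ) • Pslash V y) V).2 x 1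
      = -((L0 m e φ₀ (fun y => (V y 1).re) x : ℝ) : ℂ)
        - 𝕚 * ((L0 m e φ₀ (fun y => (V y 1).im) x : ℝ) : ℂ) := by
  have hPs : Pslash (fun y => -(((1 / (2 * m) : ℝ)) : ℂ) • Pslash V y) x
      = -(((1 / (2 * m) : ℝ)) : ℂ) • Pslash (Pslash V) x :=
    Pslash_smul _ (fun _ => diff_of_contDiff (contDiff_pslash hV)) x
  have hsplit : lap (fun y => V y 1) x
      = ((lap (fun y => (V y 1).re) x : ℝ) : ℂ)
        + ((lap (fun y => (V y 1).im) x : ℝ) : ℂ) * 𝕚 :=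
    lap_split (contDiff_comp_pi hV 1) x
  have hVx : V x 1 = (((V x 1).re : ℝ) : ℂ) + (((V x 1).im : ℝ) : ℂ) * 𝕚 :=
    (Complex.re_add_im _).symm
  simp only [Mop, Pi.add_apply, Pi.sub_apply, Pi.smul_apply, smul_eq_mul,
    Matrix.cons_val_one, Matrix.head_cons, mul_zero, add_zero, hPs]
  rw [pslash_sq1 hV x, hsplit, hVx]
  simp only [L0]
  push_cast
  ring

/-- Postcomposition of a Schwartz map with a continuous linear map. -/
def compSM (L : F →L[ℝ] G) (f : SchwartzMap (EuclideanSpace ℝ (Fin 3)) F) :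
    SchwartzMap (EuclideanSpace ℝ (Fin 3)) G :=
  SchwartzMap.bilinLeftCLM ((ContinuousLinearMap.lsmul ℝ ℝ).flip.comp L)
    (Function.HasTemperateGrowth.const (1 : ℝ)) f

lemma compSM_apply (L : F →L[ℝ] G) (f : SchwartzMap (EuclideanSpace ℝ (Fin 3)) F)
    (x : E3) : compSM L f x = L (f x) :=
  one_smul ℝ (L (f x))

end MopAux

/-- assuming the nondegeneracy of the Choquard ground state
(among Schwartz functions, `ker L₀ = span{φ₀}` and
`ker L₁ = span{∂₁φ₀, ∂₂φ₀, ∂₃φ₀}`), the Schwartz-class kernel of `𝔐`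
consists exactly of the pairs `U = −(1/(2m))P̸V`,
`V = (a·∇φ₀)e₁ + ibφ₀e₁ + cφ₀e₂` with `a ∈ ℝ³`, `b ∈ ℝ`, `c ∈ ℂ`. -/
theorem Mop_kernel_characterization
    (m e : ℝ) (hm : 0 < m) (he : e ≠ 0)
    (φ₀ : EuclideanSpace ℝ (Fin 3) → ℝ)
    (hφ₀ : IsChoquardGroundState m e φ₀)
    (hker0 : ∀ v : SchwartzMap (EuclideanSpace ℝ (Fin 3)) ℝ,
      (∀ x, L0 m e φ₀ (⇑v) x = 0) ↔ ∃ c : ℝ, ∀ x, v x = c * φ₀ x)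
    (hker1 : ∀ v : SchwartzMap (EuclideanSpace ℝ (Fin 3)) ℝ,
      (∀ x, L1 m e φ₀ (⇑v) x = 0) ↔
        ∃ a : Fin 3 → ℝ, ∀ x, v x = ∑ j : Fin 3, a j * pd j φ₀ x)
    (U V : SchwartzMap (EuclideanSpace ℝ (Fin 3)) (Fin 2 → ℂ)) :
    ((∀ x, (Mop m e φ₀ (⇑U) (⇑V)).1 x = 0) ∧
     (∀ x, (Mop m e φ₀ (⇑U) (⇑V)).2 x = 0))
    ↔
    (∃ (a : Fin 3 → ℝ) (b : ℝ) (c : ℂ),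
      (∀ x, U x = -(((1 / (2 * m) : ℝ)) : ℂ) • Pslash (⇑V) x) ∧
      (∀ x, V x =
        (((∑ j : Fin 3, a j * pd j φ₀ x : ℝ) : ℂ) + Complex.I * (b : ℂ) * (φ₀ x : ℂ)) •
          (![1, 0] : Fin 2 → ℂ)
        + (c * (φ₀ x : ℂ)) • (![0, 1] : Fin 2 → ℂ))) := by
  classical
  obtain ⟨-, -, ⟨Φ, hΦ⟩, -⟩ := hφ₀
  have hΦeq : ⇑Φ = φ₀ := funext hΦ
  subst hΦeq
  have hV : ContDiff ℝ ((⊤:ℕ∞):WithTop ℕ∞) ⇑V := V.smooth ⊤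
  have h2m : ((2*m:ℝ):ℂ) ≠ 0 := by
    have h : (2*m:ℝ) ≠ 0 := by positivity
    exact_mod_cast h
  constructor
  · rintro ⟨h1, h2⟩
    have hU : ∀ x, U x = -(((1 / (2 * m) : ℝ)) : ℂ) • Pslash (⇑V) x := by
      intro x
      have h := h1 x
      simp only [Mop] at h
      have h' : ((2*m:ℝ):ℂ) • U x = -Pslash (⇑V) x := by
        rw [add_eq_zero_iff_eq_neg] at h
        exact h
      calc U x = (((2*m:ℝ):ℂ))⁻¹ • (((2*m:ℝ):ℂ) • U x) := by
            rw [smul_smul, inv_mul_cancel₀ h2m, one_smul]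
        _ = (((2*m:ℝ):ℂ))⁻¹ • (-Pslash (⇑V) x) := by rw [h']
        _ = -(((1 / (2 * m) : ℝ)) : ℂ) • Pslash (⇑V) x := by
            rw [smul_neg, ← neg_smul]
            congr 1
            push_cast
            ring
    have hUfun : ⇑U = fun y => -(((1 / (2 * m) : ℝ)) : ℂ) • Pslash (⇑V) y := funext hU
    rw [hUfun] at h2
    have hL10 : ∀ x, L1 m e (⇑Φ) (fun y => (V y 0).re) x = 0
        ∧ L0 m e (⇑Φ) (fun y => (V y 0).im) x = 0 := by
      intro x
      have h := congrFun (h2 x) 0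
      rw [MopAux.key0 m e (⇑Φ) hV x] at h
      constructor
      · have hre := congrArg Complex.re h
        simpa using hre
      · have him := congrArg Complex.im h
        simpa using him
    have hL01 : ∀ x, L0 m e (⇑Φ) (fun y => (V y 1).re) x = 0
        ∧ L0 m e (⇑Φ) (fun y => (V y 1).im) x = 0 := by
      intro x
      have h := congrFun (h2 x) 1
      rw [MopAux.key1 m e (⇑Φ) hV x] at h
      constructor
      · have hre := congrArg Complex.re h
        simpa using hre
      · have him := congrArg Complex.im h
        simpa using him
    -- Schwartz components of V
    let P0 := MopAux.compSM (Complex.reCLM.comp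
      (ContinuousLinearMap.proj (R := ℝ) (φ := fun _ : Fin 2 => ℂ) 0)) V
    let Q0 := MopAux.compSM (Complex.imCLM.comp
      (ContinuousLinearMap.proj (R := ℝ) (φ := fun _ : Fin 2 => ℂ) 0)) V
    let P1 := MopAux.compSM (Complex.reCLM.comp
      (ContinuousLinearMap.proj (R := ℝ) (φ := fun _ : Fin 2 => ℂ) 1)) V
    let Q1 := MopAux.compSM (Complex.imCLM.comp
      (ContinuousLinearMap.proj (R := ℝ) (φ := fun _ : Fin 2 => ℂ) 1)) V
    have hP0 : ⇑P0 = fun y => (V y 0).re := funext fun y => by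
      simp [P0, MopAux.compSM_apply]
    have hQ0 : ⇑Q0 = fun y => (V y 0).im := funext fun y => by
      simp [Q0, MopAux.compSM_apply]
    have hP1 : ⇑P1 = fun y => (V y 1).re := funext fun y => by
      simp [P1, MopAux.compSM_apply]
    have hQ1 : ⇑Q1 = fun y => (V y 1).im := funext fun y => by
      simp [Q1, MopAux.compSM_apply]
    obtain ⟨a, ha⟩ := (hker1 P0).mp (by rw [hP0]; exact fun x => (hL10 x).1)
    obtain ⟨b, hb⟩ := (hker0 Q0).mp (by rw [hQ0]; exact fun x => (hL10 x).2)
    obtain ⟨cr, hcr⟩ := (hker0 P1).mp (by rw [hP1]; exact fun x => (hL01 x).1)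
    obtain ⟨ci, hci⟩ := (hker0 Q1).mp (by rw [hQ1]; exact fun x => (hL01 x).2)
    have ha' : ∀ x, (V x 0).re = ∑ j : Fin 3, a j * pd j (⇑Φ) x := by
      intro x; rw [← congrFun hP0 x]; exact ha x
    have hb' : ∀ x, (V x 0).im = b * Φ x := by
      intro x; rw [← congrFun hQ0 x]; exact hb x
    have hcr' : ∀ x, (V x 1).re = cr * Φ x := by
      intro x; rw [← congrFun hP1 x]; exact hcr x
    have hci' : ∀ x, (V x 1).im = ci * Φ x := by
      intro x; rw [← congrFun hQ1 x]; exact hci x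
    refine ⟨a, b, (cr : ℂ) + (ci : ℂ) * Complex.I, hU, ?_⟩
    intro x
    funext i
    fin_cases i
    · show V x 0 = ((((∑ j : Fin 3, a j * pd j (⇑Φ) x : ℝ)) : ℂ)
          + Complex.I * (b : ℂ) * ((Φ x : ℝ) : ℂ)) * 1
          + ((cr : ℂ) + (ci : ℂ) * Complex.I) * ((Φ x : ℝ) : ℂ) * 0
      have h0 : V x 0 = (((V x 0).re : ℝ) : ℂ) + (((V x 0).im : ℝ) : ℂ) * Complex.I :=
        (Complex.re_add_im _).symm
      rw [h0, ha' x, hb' x]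
      push_cast
      ring
    · show V x 1 = ((((∑ j : Fin 3, a j * pd j (⇑Φ) x : ℝ)) : ℂ)
          + Complex.I * (b : ℂ) * ((Φ x : ℝ) : ℂ)) * 0
          + ((cr : ℂ) + (ci : ℂ) * Complex.I) * ((Φ x : ℝ) : ℂ) * 1
      have h0 : V x 1 = (((V x 1).re : ℝ) : ℂ) + (((V x 1).im : ℝ) : ℂ) * Complex.I :=
        (Complex.re_add_im _).symm
      rw [h0, hcr' x, hci' x]
      push_cast
      ring
  · rintro ⟨a, b, c, hU, hVform⟩
    have hUfun : ⇑U = fun y => -(((1 / (2 * m) : ℝ)) : ℂ) • Pslash (⇑V) y := funext hU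
    have hc0 : ∀ y, V y 0 = ((∑ j : Fin 3, a j * pd j (⇑Φ) y : ℝ) : ℂ)
        + Complex.I * (b : ℂ) * ((Φ y : ℝ) : ℂ) := by
      intro y
      have h := congrFun (hVform y) 0
      simpa using h
    have hc1 : ∀ y, V y 1 = c * ((Φ y : ℝ) : ℂ) := by
      intro y
      have h := congrFun (hVform y) 1
      simpa using h
    have hre0 : (fun y => (V y 0).re) = fun y => ∑ j : Fin 3, a j * pd j (⇑Φ) y := by
      funext y; rw [hc0 y]; simp
    have him0 : (fun y => (V y 0).im) = fun y => b * Φ y := by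
      funext y; rw [hc0 y]; simp
    have hre1 : (fun y => (V y 1).re) = fun y => c.re * Φ y := by
      funext y; rw [hc1 y]; simp
    have him1 : (fun y => (V y 1).im) = fun y => c.im * Φ y := by
      funext y; rw [hc1 y]; simp
    -- kernel facts
    let W : SchwartzMap (EuclideanSpace ℝ (Fin 3)) ℝ :=
      a 0 • LineDeriv.lineDerivOpCLM ℝ (SchwartzMap (EuclideanSpace ℝ (Fin 3)) ℝ) (EuclideanSpace.single 0 1 : EuclideanSpace ℝ (Fin 3)) Φ
        + a 1 • LineDeriv.lineDerivOpCLM ℝ (SchwartzMap (EuclideanSpace ℝ (Fin 3)) ℝ) (EuclideanSpace.single 1 1 : EuclideanSpace ℝ (Fin 3)) Φ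
        + a 2 • LineDeriv.lineDerivOpCLM ℝ (SchwartzMap (EuclideanSpace ℝ (Fin 3)) ℝ) (EuclideanSpace.single 2 1 : EuclideanSpace ℝ (Fin 3)) Φ
    have hWcoe : ∀ y, W y = ∑ j : Fin 3, a j * pd j (⇑Φ) y := by
      intro y
      rw [Fin.sum_univ_three]
      simp only [W, SchwartzMap.add_apply, SchwartzMap.smul_apply,
        LineDeriv.lineDerivOpCLM_apply, SchwartzMap.lineDerivOp_apply_eq_fderiv, smul_eq_mul, pd]
    have hWL1 : ∀ x, L1 m e (⇑Φ) (fun y => (V y 0).re) x = 0 := by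
      intro x
      rw [hre0, show (fun y => ∑ j : Fin 3, a j * pd j (⇑Φ) y) = ⇑W from (funext hWcoe).symm]
      exact (hker1 W).mpr ⟨a, hWcoe⟩ x
    have hbL0 : ∀ x, L0 m e (⇑Φ) (fun y => (V y 0).im) x = 0 := by
      intro x
      rw [him0, show (fun y => b * Φ y) = ⇑(b • Φ) from funext fun y => by
        rw [SchwartzMap.smul_apply]; simp]
      exact (hker0 (b • Φ)).mpr ⟨b, fun y => by rw [SchwartzMap.smul_apply]; simp⟩ x
    have hcrL0 : ∀ x, L0 m e (⇑Φ) (fun y => (V y 1).re) x = 0 := by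
      intro x
      rw [hre1, show (fun y => c.re * Φ y) = ⇑(c.re • Φ) from funext fun y => by
        rw [SchwartzMap.smul_apply]; simp]
      exact (hker0 (c.re • Φ)).mpr ⟨c.re, fun y => by rw [SchwartzMap.smul_apply]; simp⟩ x
    have hciL0 : ∀ x, L0 m e (⇑Φ) (fun y => (V y 1).im) x = 0 := by
      intro x
      rw [him1, show (fun y => c.im * Φ y) = ⇑(c.im • Φ) from funext fun y => by
        rw [SchwartzMap.smul_apply]; simp]
      exact (hker0 (c.im • Φ)).mpr ⟨c.im, fun y => by rw [SchwartzMap.smul_apply]; simp⟩ x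
    constructor
    · intro x
      simp only [Mop, hUfun]
      rw [smul_smul]
      have hmC : (m:ℂ) ≠ 0 := by exact_mod_cast hm.ne'
      have hsc : ((2*m:ℝ):ℂ) * -(((1 / (2 * m) : ℝ)) : ℂ) = -1 := by
        push_cast
        field_simp
      rw [hsc, neg_smul, one_smul, neg_add_cancel]
    · intro x
      rw [hUfun]
      funext i
      fin_cases i
      · show (Mop m e (⇑Φ) (fun y => -(((1 / (2 * m) : ℝ)) : ℂ) • Pslash (⇑V) y) (⇑V)).2 x 0
            = 0
        rw [MopAux.key0 m e (⇑Φ) hV x, hWL1 x, hbL0 x]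
        simp
      · show (Mop m e (⇑Φ) (fun y => -(((1 / (2 * m) : ℝ)) : ℂ) • Pslash (⇑V) y) (⇑V)).2 x 1
            = 0
        rw [MopAux.key1 m e (⇑Φ) hV x, hcrL0 x, hciL0 x]
        simp
end
end
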